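/- Define rational numbers C_p by C_0 = 1 and Σ_{q=0}^p C_{p−q}/(2q+1)! = 0 for p ≥ 1, and let E_{2q} denote Euler numbers (coefficients in 1/cosh x = Σ E_{2q} x^{2q}/(2q)!). Then for all p ≥ 0, Σ_{q=0}^p E_{2q}·C_{p−q}/(2q)! = 2^{2p}·C_p. -/

import Mathlib

open Finset PowerSeries

/-- The formal power series cosh x = ∑ x^(2n)/(2n)!. -/
noncomputable def coshPS : PowerSeries ℚ :=
  PowerSeries.mk fun n => if n % 2 = 0 then 1 / (Nat.factorial n : ℚ) else 0

noncomputable def SxPS : PowerSeries ℚ :=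
  PowerSeries.mk fun n => if n % 2 = 0 then 1 / (Nat.factorial (n + 1) : ℚ) else 0

noncomputable def sinhPS : PowerSeries ℚ :=
  PowerSeries.mk fun n => if n % 2 = 1 then 1 / (Nat.factorial n : ℚ) else 0

lemma X_mul_Sx : (PowerSeries.X : PowerSeries ℚ) * SxPS = sinhPS := by
  ext n
  cases n with
  | zero => simp [coeff_zero_eq_constantCoeff, map_mul, constantCoeff_X, sinhPS]
  | succ m =>
    rw [coeff_succ_X_mul]
    simp only [SxPS, sinhPS, coeff_mk]
    by_cases h : m % 2 = 0
    · rw [if_pos h, if_pos (by omega)]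
    · rw [if_neg h, if_neg (by omega)]

lemma two_smul_sinh : (2:ℚ) • sinhPS = exp ℚ - rescale (-1) (exp ℚ) := by
  ext n
  rw [map_smul, map_sub, coeff_rescale, coeff_exp]
  simp only [sinhPS, coeff_mk, smul_eq_mul, Algebra.algebraMap_self, RingHom.id_apply]
  by_cases h : n % 2 = 1
  · rw [if_pos h, Odd.neg_one_pow (Nat.odd_iff.2 h)]; ring
  · rw [if_neg h, Even.neg_one_pow (Nat.even_iff.2 (by omega))]; ring

lemma two_smul_cosh : (2:ℚ) • coshPS = exp ℚ + rescale (-1) (exp ℚ) := by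
  ext n
  rw [map_smul, map_add, coeff_rescale, coeff_exp]
  simp only [coshPS, coeff_mk, smul_eq_mul, Algebra.algebraMap_self, RingHom.id_apply]
  by_cases h : n % 2 = 0
  · rw [if_pos h, Even.neg_one_pow (Nat.even_iff.2 h)]; ring
  · rw [if_neg h, Odd.neg_one_pow (Nat.odd_iff.2 (by omega))]; ring

lemma rescale_C' (a r : ℚ) : rescale a (PowerSeries.C r) = PowerSeries.C r := by
  ext n
  by_cases h : n = 0 <;> simp [coeff_rescale, coeff_C, h]

lemma sinh_cosh : (2:ℚ) • (sinhPS * coshPS) = rescale 2 sinhPS := by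
  have he : exp ℚ * exp ℚ = rescale 2 (exp ℚ) := by
    have h := exp_mul_exp_eq_exp_add (1:ℚ) 1
    rw [rescale_one] at h
    norm_num at h
    exact h
  have hf : rescale (-1) (exp ℚ) * rescale (-1) (exp ℚ) = rescale (-2) (exp ℚ) := by
    have h := exp_mul_exp_eq_exp_add (-1:ℚ) (-1)
    norm_num at h
    exact h
  have key : ((2:ℚ) • sinhPS) * ((2:ℚ) • coshPS)
      = rescale 2 (exp ℚ) - rescale (-2) (exp ℚ) := by
    rw [two_smul_sinh, two_smul_cosh]
    calc (exp ℚ - rescale (-1) (exp ℚ)) * (exp ℚ + rescale (-1) (exp ℚ))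
        = exp ℚ * exp ℚ - rescale (-1) (exp ℚ) * rescale (-1) (exp ℚ) := by ring
      _ = rescale 2 (exp ℚ) - rescale (-2) (exp ℚ) := by rw [he, hf]
  have key2 : rescale 2 ((2:ℚ) • sinhPS) = rescale 2 (exp ℚ) - rescale (-2) (exp ℚ) := by
    rw [two_smul_sinh, map_sub, rescale_rescale]
    norm_num
  have key3 : rescale 2 ((2:ℚ) • sinhPS) = (2:ℚ) • rescale 2 sinhPS := by
    rw [smul_eq_C_mul, map_mul, rescale_C', smul_eq_C_mul]
  have key4 : ((2:ℚ) • sinhPS) * ((2:ℚ) • coshPS) = (2:ℚ) • ((2:ℚ) • (sinhPS * coshPS)) := by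
    rw [smul_mul_smul_comm, smul_smul]
  have : (2:ℚ) • ((2:ℚ) • (sinhPS * coshPS)) = (2:ℚ) • rescale 2 sinhPS := by
    rw [← key4, key, ← key2, key3]
  exact smul_right_injective _ (by norm_num : (2:ℚ) ≠ 0) this

lemma Sx_cosh : SxPS * coshPS = rescale 2 SxPS := by
  have h := sinh_cosh
  rw [← X_mul_Sx, smul_eq_C_mul, map_mul, rescale_X] at h
  have h2 : (PowerSeries.C 2 * X) * (SxPS * coshPS) = (PowerSeries.C 2 * X) * rescale 2 SxPS := by
    rw [← h]; ring
  have hne : (PowerSeries.C 2 * X : PowerSeries ℚ) ≠ 0 := by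
    apply mul_ne_zero
    · intro hc
      have := congrArg (constantCoeff) hc
      simp at this
    · exact X_ne_zero
  exact mul_left_cancel₀ hne h2

lemma sum_range_even (f : ℕ → ℚ) (hf : ∀ i, i % 2 = 1 → f i = 0) (p : ℕ) :
    ∑ i ∈ Finset.range (2 * p + 1), f i = ∑ q ∈ Finset.range (p + 1), f (2 * q) := by
  induction p with
  | zero => simp
  | succ m ih =>
    have e1 : 2 * (m + 1) + 1 = (2 * m + 1) + 1 + 1 := by ring
    have e2 : 2 * (m + 1) = 2 * m + 2 := by ring
    rw [e1, Finset.sum_range_succ, Finset.sum_range_succ, ih,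
      hf (2 * m + 1) (by omega), Finset.sum_range_succ (fun q => f (2 * q)) (m + 1), e2]
    ring

lemma coeff_mul_range (A B : PowerSeries ℚ) (n : ℕ) :
    (PowerSeries.coeff n) (A * B)
      = ∑ k ∈ Finset.range (n + 1), (PowerSeries.coeff k) A * (PowerSeries.coeff (n - k)) B := by
  rw [coeff_mul]
  exact Finset.Nat.sum_antidiagonal_eq_sum_range_succ_mk _ _

theorem C_Euler_convolution (C : ℕ → ℚ) (hC0 : C 0 = 1)
    (hCrec : ∀ p : ℕ, 1 ≤ p → ∑ q ∈ Finset.range (p + 1), C (p - q) / (Nat.factorial (2 * q + 1) : ℚ) = 0)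
    (E : ℕ → ℚ)
    (hE : (PowerSeries.mk fun n => if n % 2 = 0 then E n / (Nat.factorial n : ℚ) else 0) *
        coshPS = 1)
    (p : ℕ) :
    ∑ q ∈ Finset.range (p + 1), E (2 * q) * C (p - q) / (Nat.factorial (2 * q) : ℚ) =
      2 ^ (2 * p) * C p := by
  set G : PowerSeries ℚ := PowerSeries.mk fun n => if n % 2 = 0 then E n / (Nat.factorial n : ℚ) else 0 with hG
  set F : PowerSeries ℚ := PowerSeries.mk fun n => if n % 2 = 0 then C (n / 2) else 0 with hFdef
  have hF : F * SxPS = 1 := by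
    ext n
    rw [coeff_mul_range, coeff_one]
    by_cases hodd : n % 2 = 1
    · rw [if_neg (by omega)]
      apply Finset.sum_eq_zero
      intro k hk
      by_cases hk2 : k % 2 = 0
      · have h3 : ¬ ((n - k) % 2 = 0) := by have := Finset.mem_range.1 hk; omega
        simp [hFdef, SxPS, coeff_mk, h3]
      · simp [hFdef, coeff_mk, hk2]
    · obtain ⟨m, rfl⟩ : ∃ m, n = 2 * m := ⟨n / 2, by omega⟩
      rw [sum_range_even _ (fun i hi => by simp [hFdef, coeff_mk, show ¬ (i % 2 = 0) by omega]) m]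
      rcases Nat.eq_zero_or_pos m with hm | hm
      · subst hm
        simp [hFdef, SxPS, coeff_mk, hC0]
      · rw [if_neg (by omega)]
        have hrec := hCrec m hm
        rw [← Finset.sum_range_reflect] at hrec
        rw [← hrec]
        apply Finset.sum_congr rfl
        intro q hq
        have hq' : q ≤ m := by have := Finset.mem_range.1 hq; omega
        have e1 : (2 * q) % 2 = 0 := by omega
        have e2 : (2 * m - 2 * q) % 2 = 0 := by omega
        have e3 : (2 * q) / 2 = q := by omega
        have e4 : m - (m + 1 - 1 - q) = q := by omega
        have e5 : 2 * (m + 1 - 1 - q) + 1 = (2 * m - 2 * q) + 1 := by omega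
        simp only [hFdef, SxPS, coeff_mk, if_pos e1, if_pos e2, e3, e4, e5]
        rw [mul_one_div]
  have h1 : (G * F) * rescale 2 SxPS = 1 := by
    rw [← Sx_cosh]
    calc G * F * (SxPS * coshPS) = (F * SxPS) * (G * coshPS) := by ring
      _ = 1 := by rw [hF, hE, one_mul]
  have h2 : (rescale 2 F) * rescale 2 SxPS = 1 := by rw [← map_mul, hF, map_one]
  have hne : (rescale 2 SxPS : PowerSeries ℚ) ≠ 0 := by
    intro h0; rw [h0, mul_zero] at h2; exact one_ne_zero h2.symm
  have hGF : G * F = rescale 2 F := mul_right_cancel₀ hne (h1.trans h2.symm)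
  have hco := congrArg (PowerSeries.coeff (2 * p)) hGF
  rw [coeff_mul_range, coeff_rescale,
    sum_range_even _ (fun i hi => by simp [hG, coeff_mk, show ¬ (i % 2 = 0) by omega]) p] at hco
  have hcF : (PowerSeries.coeff (2 * p)) F = C p := by
    simp [hFdef, coeff_mk, show (2 * p) % 2 = 0 by omega, show (2 * p) / 2 = p by omega]
  rw [hcF] at hco
  rw [← hco]
  apply Finset.sum_congr rfl
  intro q hq
  have hq' : q ≤ p := by have := Finset.mem_range.1 hq; omega
  have e1 : (2 * q) % 2 = 0 := by omega
  have e2 : (2 * p - 2 * q) % 2 = 0 := by omega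
  have e3 : (2 * p - 2 * q) / 2 = p - q := by omega
  simp only [hG, hFdef, coeff_mk, if_pos e1, if_pos e2, e3]
  rw [div_mul_eq_mul_div]
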